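/- Let J ≥ 2 be an integer, T = 2^J, λ > 0, c′ > 0, and suppose λ_{d+1} > T/(d·log(1 + T/λ)) for a positive integer d and a real λ_{d+1} > 0 (as holds when d is the effective dimension). Then Σ_{j=1}^{J−1} (2^{j−1}·c′·√T·(J−j+1))/λ_{d+1} ≤ c′·d·√(T/4)·log₂(T/2)·log(1 + T/λ). -/

import Mathlib

lemma aux14 (n : ℕ) : ∑ i ∈ Finset.range n, (2:ℝ)^i * ((n:ℝ) + 1 - i) ≤ n * 2^n := by
  induction n with
  | zero => simp
  | succ n ih =>
    rw [Finset.sum_range_succ]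
    have h1 : ∑ i ∈ Finset.range n, (2:ℝ)^i * ((n+1:ℝ) + 1 - i)
        = (∑ i ∈ Finset.range n, (2:ℝ)^i * ((n:ℝ) + 1 - i)) + ∑ i ∈ Finset.range n, (2:ℝ)^i := by
      rw [← Finset.sum_add_distrib]
      apply Finset.sum_congr rfl
      intro i _; ring
    have h2 : ∑ i ∈ Finset.range n, (2:ℝ)^i = 2^n - 1 := by
      have := geom_sum_eq (by norm_num : (2:ℝ) ≠ 1) n
      field_simp at this; linarith
    push_cast
    rw [h1, h2]
    have hn : (1:ℝ) ≤ 2^n := one_le_pow₀ (by norm_num)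
    rcases Nat.eq_zero_or_pos n with h | h
    · subst h; norm_num
    · have h1n : (1:ℝ) ≤ n := by exact_mod_cast h
      have h2n : (2:ℝ)^n ≤ n * 2^n := by nlinarith
      rw [pow_succ]; nlinarith [ih, h2n]


/-- Let `J ≥ 2`, `T = 2^J`, `λ > 0`, `c′ > 0`, and suppose
`λ_{d+1} > T/(d·log(1 + T/λ))` for a positive integer `d` and a real `λ_{d+1} > 0`
(as holds when `d` is the effective dimension). Then
`∑_{j=1}^{J−1} 2^{j−1}·c′·√T·(J−j+1)/λ_{d+1} ≤ c′·d·√(T/4)·log₂(T/2)·log(1 + T/λ)`. -/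
theorem statement14 (J : ℕ) (hJ : 2 ≤ J) (T lam c' : ℝ) (hT : T = 2 ^ J)
    (hlam : 0 < lam) (hc' : 0 < c') (d : ℕ) (hd : 0 < d)
    (lamd1 : ℝ) (hlamd1 : 0 < lamd1)
    (hgap : lamd1 > T / (d * Real.log (1 + T / lam))) :
    ∑ j ∈ Finset.Icc 1 (J - 1),
        (2 : ℝ) ^ (j - 1) * c' * Real.sqrt T * ((J : ℝ) - j + 1) / lamd1 ≤
      c' * d * Real.sqrt (T / 4) * Real.logb 2 (T / 2) * Real.log (1 + T / lam) := by
  set L := Real.log (1 + T / lam) with hL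
  have hTpos : (0:ℝ) < T := by rw [hT]; positivity
  have hLpos : 0 < L := Real.log_pos (by have : 0 < T / lam := div_pos hTpos hlam; linarith)
  have hdL : (0:ℝ) < d * L := by positivity
  -- 1/lamd1 ≤ d*L/T
  have hinv : 1 / lamd1 ≤ d * L / T := by
    rw [div_le_div_iff₀ hlamd1 hTpos]
    have := (div_lt_iff₀ hdL).mp hgap
    nlinarith
  have hsqT : (0:ℝ) < Real.sqrt T := Real.sqrt_pos.mpr hTpos
  -- rewrite the sum
  have hsum : ∑ j ∈ Finset.Icc 1 (J - 1),
      (2 : ℝ) ^ (j - 1) * c' * Real.sqrt T * ((J : ℝ) - j + 1) / lamd1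
      = (c' * Real.sqrt T / lamd1) *
        ∑ i ∈ Finset.range (J - 1), (2:ℝ)^i * (((J-1 : ℕ):ℝ) + 1 - i) := by
    have hIcc : Finset.Icc 1 (J-1) = Finset.Ico 1 J := by
      rw [← Finset.Ico_add_one_right_eq_Icc]; congr 1; omega
    rw [hIcc, Finset.mul_sum, Finset.sum_Ico_eq_sum_range]
    apply Finset.sum_congr (by congr 1)
    intro i hi
    have h1 : (1 + i) - 1 = i := by omega
    have h2 : (((J-1:ℕ):ℝ) + 1 - i) = ((J:ℝ) - (1+i:ℕ) + 1) := by
      have : (((J-1:ℕ)):ℝ) = (J:ℝ) - 1 := by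
        have : (1:ℕ) ≤ J := by omega
        push_cast [Nat.cast_sub this]; ring
      rw [this]; push_cast; ring
    rw [h1, h2]; ring
  rw [hsum]
  have hkey := aux14 (J - 1)
  have hS : (0:ℝ) ≤ ∑ i ∈ Finset.range (J - 1), (2:ℝ)^i * (((J-1 : ℕ):ℝ) + 1 - i) := by
    apply Finset.sum_nonneg
    intro i hi
    have hi' := Finset.mem_range.mp hi
    have : (i:ℝ) ≤ ((J-1:ℕ):ℝ) := by exact_mod_cast hi'.le
    have h2 : (0:ℝ) ≤ ((J-1:ℕ):ℝ) + 1 - i := by linarith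
    positivity
  -- RHS simplification
  have hsq4 : Real.sqrt (T / 4) = Real.sqrt T / 2 := by
    rw [show (T/4 : ℝ) = T / 2^2 by ring, Real.sqrt_div hTpos.le,
      Real.sqrt_sq (by norm_num : (0:ℝ) ≤ 2)]
  have hlogb : Real.logb 2 (T / 2) = ((J - 1 : ℕ) : ℝ) := by
    have hp : (2:ℝ) ^ J = 2 ^ (J - 1 : ℕ) * 2 := by
      rw [← pow_succ]; congr 1; omega
    have : T / 2 = 2 ^ (J - 1 : ℕ) := by rw [hT, hp]; ring
    rw [this, Real.logb_pow, Real.logb_self_eq_one (by norm_num)]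
    ring
  rw [hsq4, hlogb]
  -- main estimate
  calc (c' * Real.sqrt T / lamd1) * ∑ i ∈ Finset.range (J - 1), (2:ℝ)^i * (((J-1 : ℕ):ℝ) + 1 - i)
      ≤ (c' * Real.sqrt T * (d * L / T)) * (((J-1:ℕ):ℝ) * 2^(J-1)) := by
        have hfac : c' * Real.sqrt T / lamd1 ≤ c' * Real.sqrt T * (d * L / T) := by
          calc c' * Real.sqrt T / lamd1 = c' * Real.sqrt T * (1 / lamd1) := by ring
            _ ≤ c' * Real.sqrt T * (d * L / T) :=
                mul_le_mul_of_nonneg_left hinv (by positivity)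
        exact mul_le_mul hfac hkey hS (by positivity)
    _ = c' * d * (Real.sqrt T / 2) * ((J-1:ℕ):ℝ) * L * ((2:ℝ)^(J-1) * 2 / T) := by ring
    _ = c' * d * (Real.sqrt T / 2) * ((J-1:ℕ):ℝ) * L := by
        have : ((2:ℝ)^(J-1) * 2 / T) = 1 := by
          rw [hT, show J = (J-1)+1 by omega, pow_succ]
          field_simp
          simp
        rw [this, mul_one]
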